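/- The coefficient of z^{n-2} in the polynomial ∏_{k=1}^n (z + (n+1)/(n+2-k)) equals ((n+1)^2/2)·(H_n^2 − H_n^{(2)}) − n(n+1)(H_n − 1). -/

import Mathlib

open Finset

/-- Sum over 2-element subsets equals the usual symmetric-function formula. -/
lemma sum_powersetCard_two {α : Type*} [DecidableEq α] (s : Finset α) (f : α → ℚ) :
    ∑ t ∈ s.powersetCard 2, ∏ i ∈ t, f i =
      ((∑ i ∈ s, f i) ^ 2 - ∑ i ∈ s, (f i) ^ 2) / 2 := by
  induction s using Finset.induction with
  | empty => rw [Finset.powersetCard_eq_empty.2 (by simp), Finset.sum_empty]; simp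
  | insert _ _ hx ih =>
    rename_i x s
    rw [Finset.powersetCard_succ_insert hx, Finset.sum_union, Finset.sum_image, ih]
    · have h1 : ∑ t ∈ s.powersetCard 1, ∏ i ∈ insert x t, f i
          = f x * ∑ i ∈ s, f i := by
        rw [Finset.powersetCard_one, Finset.sum_map, Finset.mul_sum]
        refine Finset.sum_congr rfl fun i hi => ?_
        simp only [Function.Embedding.coeFn_mk]
        rw [Finset.prod_insert (fun h : x ∈ {i} => hx (by rw [Finset.mem_singleton] at h; exact h ▸ hi)),
          Finset.prod_singleton]
      rw [h1, Finset.sum_insert hx, Finset.sum_insert hx]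
      ring
    · intro t ht u hu htu
      have htx : x ∉ t := fun h => hx (Finset.mem_powersetCard.mp ht |>.1 h)
      have hux : x ∉ u := fun h => hx (Finset.mem_powersetCard.mp hu |>.1 h)
      have := congrArg (Finset.erase · x) htu
      simpa [Finset.erase_insert htx, Finset.erase_insert hux] using this
    · rw [Finset.disjoint_right]
      rintro t ht ht'
      simp only [Finset.mem_image] at ht
      obtain ⟨u, _, rfl⟩ := ht
      exact hx (Finset.mem_powersetCard.mp ht' |>.1 (Finset.mem_insert_self x u))

lemma sum_shift (n : ℕ) (g : ℚ → ℚ) :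
    ∑ k ∈ Finset.Icc 1 n, g ((n : ℚ) + 2 - (k : ℚ)) =
      ∑ j ∈ Finset.Icc 1 n, g ((j : ℚ) + 1) := by
  refine Finset.sum_nbij' (fun k => n + 1 - k) (fun k => n + 1 - k) ?_ ?_ ?_ ?_ ?_
  all_goals intro k hk
  all_goals simp only [Finset.mem_Icc] at *
  · omega
  · omega
  · omega
  · omega
  · have h1 : ((n + 1 - k : ℕ) : ℚ) = (n : ℚ) + 1 - (k : ℚ) := by
      have : (1:ℕ) ≤ k ∧ k ≤ n := hk
      push_cast [Nat.cast_sub (by omega : k ≤ n + 1)]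
      ring
    rw [h1]; ring_nf

lemma sum_inv_shift (n : ℕ) :
    ∑ j ∈ Finset.Icc 1 n, (1 : ℚ) / ((j : ℚ) + 1) =
      (∑ j ∈ Finset.Icc 1 n, (1 : ℚ) / (j : ℚ)) - 1 + 1 / ((n : ℚ) + 1) := by
  induction n with
  | zero => simp
  | succ m ih =>
    rw [Finset.sum_Icc_succ_top (by omega), Finset.sum_Icc_succ_top (by omega), ih]
    push_cast
    have : (m : ℚ) + 1 ≠ 0 := by positivity
    field_simp
    ring

lemma sum_inv_sq_shift (n : ℕ) :
    ∑ j ∈ Finset.Icc 1 n, (1 : ℚ) / ((j : ℚ) + 1) ^ 2 =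
      (∑ j ∈ Finset.Icc 1 n, (1 : ℚ) / (j : ℚ) ^ 2) - 1 + 1 / ((n : ℚ) + 1) ^ 2 := by
  induction n with
  | zero => simp
  | succ m ih =>
    rw [Finset.sum_Icc_succ_top (by omega), Finset.sum_Icc_succ_top (by omega), ih]
    push_cast
    have : (m : ℚ) + 1 ≠ 0 := by positivity
    field_simp
    ring

theorem coeff_z_pow_n_sub_two (n : ℕ) (hn : 2 ≤ n) :
    (∏ k ∈ Finset.Icc 1 n,
        (Polynomial.X + Polynomial.C (((n : ℚ) + 1) / ((n : ℚ) + 2 - (k : ℚ))))).coeff (n - 2) =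
      (((n : ℚ) + 1) ^ 2 / 2) *
          ((∑ j ∈ Finset.Icc 1 n, (1 : ℚ) / (j : ℚ)) ^ 2 -
            ∑ j ∈ Finset.Icc 1 n, (1 : ℚ) / ((j : ℚ) ^ 2)) -
        (n : ℚ) * ((n : ℚ) + 1) * ((∑ j ∈ Finset.Icc 1 n, (1 : ℚ) / (j : ℚ)) - 1) := by
  have hcard : #(Finset.Icc 1 n) = n := by simp
  have hk : n - 2 ≤ #(Finset.Icc 1 n) := by omega
  rw [Finset.prod_X_add_C_coeff _ _ hk, hcard]
  have h2 : n - (n - 2) = 2 := by omega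
  rw [h2, sum_powersetCard_two]
  have hne : ∀ k ∈ Finset.Icc 1 n, (n : ℚ) + 2 - (k : ℚ) ≠ 0 := by
    intro k hk'
    simp only [Finset.mem_Icc] at hk'
    have : (k : ℚ) ≤ (n : ℚ) := by exact_mod_cast hk'.2
    nlinarith
  have hS : ∑ k ∈ Finset.Icc 1 n, ((n : ℚ) + 1) / ((n : ℚ) + 2 - (k : ℚ))
      = ((n : ℚ) + 1) * ((∑ j ∈ Finset.Icc 1 n, (1 : ℚ) / (j : ℚ)) - 1 + 1 / ((n : ℚ) + 1)) := by
    rw [← sum_inv_shift, ← sum_shift n (fun x => 1 / x), Finset.mul_sum]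
    exact Finset.sum_congr rfl fun k _ => by ring
  have hQ : ∑ k ∈ Finset.Icc 1 n, (((n : ℚ) + 1) / ((n : ℚ) + 2 - (k : ℚ))) ^ 2
      = ((n : ℚ) + 1) ^ 2 *
        ((∑ j ∈ Finset.Icc 1 n, (1 : ℚ) / ((j : ℚ) ^ 2)) - 1 + 1 / ((n : ℚ) + 1) ^ 2) := by
    rw [← sum_inv_sq_shift, ← sum_shift n (fun x => 1 / x ^ 2), Finset.mul_sum]
    exact Finset.sum_congr rfl fun k _ => by rw [div_pow]; ring
  rw [hS, hQ]
  have hne1 : (n : ℚ) + 1 ≠ 0 := by positivity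
  field_simp
  ring
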